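/- arXiv:2410.21114 — 3 statements merged into one kernel-verified Lean document; each statement's English description precedes it below -/
import Mathlib

section
/- (Oleinik-type one-sided inequality.) For every t > 0 and all x, x′ ∈ ℝ with x < x′: x − t·f'(u⁺(x,t)) ≤ x′ − t·f'(u⁻(x′,t)). Consequently, for each fixed t > 0 the maps x ↦ x − t·f'(u⁺(x,t)) and x ↦ x − t·f'(u⁻(x,t)) are nondecreasing on ℝ, and f'(u⁺(x₂,t)) − f'(u⁺(x₁,t)) ≤ (x₂ − x₁)/t as well as f'(u⁻(x₂,t)) − f'(u⁻(x₁,t)) ≤ (x₂ − x₁)/t hold for all x₁ < x₂. -/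
open MeasureTheory Filter Set

noncomputable def eFun (f φ : ℝ → ℝ) (u x t : ℝ) : ℝ :=
  t * (∫ s in (0:ℝ)..u, deriv (deriv f) s * (φ (x - t * deriv f s) - s))

def maxSet (f φ : ℝ → ℝ) (x t : ℝ) : Set ℝ :=
  {w : ℝ | ∀ v : ℝ, eFun f φ v x t ≤ eFun f φ w x t}

noncomputable def uPlus (f φ : ℝ → ℝ) (x t : ℝ) : ℝ := sInf (maxSet f φ x t)

noncomputable def uMinus (f φ : ℝ → ℝ) (x t : ℝ) : ℝ := sSup (maxSet f φ x t)

section Aux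
variable {f φ : ℝ → ℝ} {M : ℝ}

lemma hasDerivF1 (hf : ContDiff ℝ 2 f) (s : ℝ) :
    HasDerivAt (deriv f) (deriv (deriv f) s) s := by
  have h1 : ContDiff ℝ 1 (deriv f) := by
    have := (contDiff_succ_iff_deriv (n := 1)).mp (by exact_mod_cast hf)
    exact this.2.2
  exact ((h1.differentiable one_ne_zero) s).hasDerivAt

lemma contF1 (hf : ContDiff ℝ 2 f) : Continuous (deriv f) :=
  continuous_iff_continuousAt.mpr fun s => (hasDerivF1 hf s).continuousAt

lemma contF2 (hf : ContDiff ℝ 2 f) : Continuous (deriv (deriv f)) := by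
  have h1 : ContDiff ℝ 1 (deriv f) := by
    have := (contDiff_succ_iff_deriv (n := 1)).mp (by exact_mod_cast hf)
    exact this.2.2
  exact (contDiff_one_iff_deriv.mp h1).2

/-- FTC for the second derivative. -/
lemma ftcF2 (hf : ContDiff ℝ 2 f) (a b : ℝ) :
    ∫ s in a..b, deriv (deriv f) s = deriv f b - deriv f a :=
  intervalIntegral.integral_deriv_eq_sub
    (fun s _ => (hasDerivF1 hf s).differentiableAt)
    ((contF2 hf).intervalIntegrable a b)

lemma strictMonoF1 (hf : ContDiff ℝ 2 f)
    (hconv : ∀ u : ℝ, 0 ≤ deriv (deriv f) u)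
    (hdeg : volume {u : ℝ | deriv (deriv f) u = 0} = 0) :
    StrictMono (deriv f) := by
  have hmono : Monotone (deriv f) := by
    intro a b hab
    have := ftcF2 hf a b
    have h2 : (0:ℝ) ≤ ∫ s in a..b, deriv (deriv f) s :=
      intervalIntegral.integral_nonneg hab (fun s _ => hconv s)
    linarith
  intro a b hab
  rcases lt_or_eq_of_le (hmono hab.le) with h | h
  · exact h
  exfalso
  have hconst : ∀ s ∈ Icc a b, deriv f s = deriv f a := by
    intro s hs
    have h1 := hmono hs.1
    have h2 := hmono hs.2
    linarith
  have hsub : Ioo a b ⊆ {u : ℝ | deriv (deriv f) u = 0} := by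
    intro s hs
    have hev : deriv f =ᶠ[nhds s] fun _ => deriv f a := by
      filter_upwards [Ioo_mem_nhds hs.1 hs.2] with u hu
      exact hconst u (Ioo_subset_Icc_self hu)
    have : deriv (deriv f) s = deriv (fun _ => deriv f a) s := hev.deriv_eq
    simpa using this
  have h0 : volume (Ioo a b) = 0 := measure_mono_null hsub hdeg
  rw [Real.volume_Ioo] at h0
  have : b - a ≤ 0 := by
    by_contra hb; push_neg at hb
    exact (ENNReal.ofReal_pos.mpr hb).ne' h0
  linarith


/-- Interval integrability from measurability and a bound. -/
lemma intInt_of_bdd {g : ℝ → ℝ} {a b C : ℝ} (hm : Measurable g)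
    (hC : ∀ s ∈ Set.uIoc a b, |g s| ≤ C) : IntervalIntegrable g volume a b := by
  rw [intervalIntegrable_iff]
  refine Integrable.mono' (g := fun _ => C) ?_ hm.aestronglyMeasurable ?_
  · exact (integrableOn_const_iff (C := C)).mpr (Or.inr (by simp [Set.uIoc]))
  · refine (ae_restrict_iff' measurableSet_uIoc).mpr (ae_of_all _ ?_)
    intro s hs
    simpa [Real.norm_eq_abs] using hC s hs

lemma measIntegrand (hf : ContDiff ℝ 2 f) (hφmeas : Measurable φ) (x t : ℝ) :
    Measurable fun s : ℝ => deriv (deriv f) s * (φ (x - t * deriv f s) - s) :=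
  (contF2 hf).measurable.mul
    ((hφmeas.comp (measurable_const.sub (measurable_const.mul (contF1 hf).measurable))).sub
      measurable_id)

lemma intIntegrand (hf : ContDiff ℝ 2 f) (hφmeas : Measurable φ)
    (hφbdd : ∀ y : ℝ, |φ y| ≤ M) (x t a b : ℝ) :
    IntervalIntegrable (fun s : ℝ => deriv (deriv f) s * (φ (x - t * deriv f s) - s))
      volume a b := by
  obtain ⟨C, hC⟩ := (isCompact_uIcc (a := a) (b := b)).exists_bound_of_continuousOn
    (contF2 hf).continuousOn
  refine intInt_of_bdd (measIntegrand hf hφmeas x t) (C := |C| * (M + (|a| + |b|))) ?_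
  intro s hs
  have hs' : s ∈ Set.uIcc a b := Set.uIoc_subset_uIcc hs
  have h1 : |deriv (deriv f) s| ≤ |C| := by
    have := hC s hs'
    rw [Real.norm_eq_abs] at this
    exact this.trans (le_abs_self C)
  have hsb : |s| ≤ |a| + |b| := by
    have ha := neg_abs_le a; have ha' := le_abs_self a
    have hb := neg_abs_le b; have hb' := le_abs_self b
    rcases Set.mem_uIcc.mp hs' with ⟨h2, h3⟩ | ⟨h2, h3⟩ <;> (rw [abs_le]; constructor <;> linarith)
  have h2 : |φ (x - t * deriv f s) - s| ≤ M + (|a| + |b|) :=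
    (abs_sub _ _).trans (add_le_add (hφbdd _) hsb)
  calc |deriv (deriv f) s * (φ (x - t * deriv f s) - s)|
      = |deriv (deriv f) s| * |φ (x - t * deriv f s) - s| := abs_mul _ _
    _ ≤ |C| * (M + (|a| + |b|)) := by
        apply mul_le_mul h1 h2 (abs_nonneg _) (abs_nonneg _)

lemma intIntegrandPhi (hf : ContDiff ℝ 2 f) (hφmeas : Measurable φ)
    (hφbdd : ∀ y : ℝ, |φ y| ≤ M) (x t a b : ℝ) :
    IntervalIntegrable (fun s : ℝ => deriv (deriv f) s * φ (x - t * deriv f s))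
      volume a b := by
  obtain ⟨C, hC⟩ := (isCompact_uIcc (a := a) (b := b)).exists_bound_of_continuousOn
    (contF2 hf).continuousOn
  refine intInt_of_bdd ((contF2 hf).measurable.mul (hφmeas.comp
    (measurable_const.sub (measurable_const.mul (contF1 hf).measurable)))) (C := |C| * M) ?_
  intro s hs
  have h1 : |deriv (deriv f) s| ≤ |C| := by
    have := hC s (Set.uIoc_subset_uIcc hs)
    rw [Real.norm_eq_abs] at this
    exact this.trans (le_abs_self C)
  calc |deriv (deriv f) s * φ (x - t * deriv f s)|
      = |deriv (deriv f) s| * |φ (x - t * deriv f s)| := abs_mul _ _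
    _ ≤ |C| * M := mul_le_mul h1 (hφbdd _) (abs_nonneg _) (abs_nonneg _)

lemma contE (hf : ContDiff ℝ 2 f) (hφmeas : Measurable φ)
    (hφbdd : ∀ y : ℝ, |φ y| ≤ M) (x t : ℝ) :
    Continuous fun u => eFun f φ u x t := by
  unfold eFun
  exact continuous_const.mul
    (intervalIntegral.continuous_primitive
      (fun a b => intIntegrand hf hφmeas hφbdd x t a b) 0)

lemma eFun_sub (hf : ContDiff ℝ 2 f) (hφmeas : Measurable φ)
    (hφbdd : ∀ y : ℝ, |φ y| ≤ M) (x t a b : ℝ) :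
    eFun f φ b x t - eFun f φ a x t
      = t * ∫ s in a..b, deriv (deriv f) s * (φ (x - t * deriv f s) - s) := by
  unfold eFun
  rw [← mul_sub, intervalIntegral.integral_interval_sub_left
    (intIntegrand hf hφmeas hφbdd x t 0 b) (intIntegrand hf hφmeas hφbdd x t 0 a)]


lemma contI (hf : ContDiff ℝ 2 f) (a b : ℝ) :
    IntervalIntegrable (fun s : ℝ => deriv (deriv f) s * s) volume a b :=
  ((contF2 hf).mul continuous_id).intervalIntegrable a b

lemma I_ge (hf : ContDiff ℝ 2 f) (hconv : ∀ u : ℝ, 0 ≤ deriv (deriv f) u)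
    {p q : ℝ} (hpq : p ≤ q) :
    p * (deriv f q - deriv f p) ≤ ∫ s in p..q, deriv (deriv f) s * s := by
  have h1 : (∫ s in p..q, deriv (deriv f) s * p) ≤ ∫ s in p..q, deriv (deriv f) s * s := by
    refine intervalIntegral.integral_mono_on hpq
      (((contF2 hf).mul continuous_const).intervalIntegrable p q) (contI hf p q) ?_
    intro s hs
    exact mul_le_mul_of_nonneg_left hs.1 (hconv s)
  rwa [intervalIntegral.integral_mul_const, ftcF2 hf, mul_comm] at h1

lemma I_le (hf : ContDiff ℝ 2 f) (hconv : ∀ u : ℝ, 0 ≤ deriv (deriv f) u)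
    {p q : ℝ} (hpq : p ≤ q) :
    (∫ s in p..q, deriv (deriv f) s * s) ≤ q * (deriv f q - deriv f p) := by
  have h1 : (∫ s in p..q, deriv (deriv f) s * s) ≤ ∫ s in p..q, deriv (deriv f) s * q := by
    refine intervalIntegral.integral_mono_on hpq (contI hf p q)
      (((contF2 hf).mul continuous_const).intervalIntegrable p q) ?_
    intro s hs
    exact mul_le_mul_of_nonneg_left hs.2 (hconv s)
  rwa [intervalIntegral.integral_mul_const, ftcF2 hf, mul_comm] at h1

lemma I_gt (hf : ContDiff ℝ 2 f) (hconv : ∀ u : ℝ, 0 ≤ deriv (deriv f) u)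
    (hdeg : volume {u : ℝ | deriv (deriv f) u = 0} = 0) {p q : ℝ} (hpq : p < q) :
    p * (deriv f q - deriv f p) < ∫ s in p..q, deriv (deriv f) s * s := by
  set m := (p + q) / 2 with hm
  have hpm : p < m := by simp [hm]; linarith
  have hmq : m < q := by simp [hm]; linarith
  have hsplit : (∫ s in p..m, deriv (deriv f) s * s) + (∫ s in m..q, deriv (deriv f) s * s)
      = ∫ s in p..q, deriv (deriv f) s * s :=
    intervalIntegral.integral_add_adjacent_intervals (contI hf p m) (contI hf m q)
  have h1 := I_ge hf hconv hpm.le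
  have h2 := I_ge hf hconv hmq.le
  have h3 : deriv f m < deriv f q := strictMonoF1 hf hconv hdeg hmq
  have h4 : 0 < (m - p) * (deriv f q - deriv f m) := mul_pos (by linarith) (by linarith)
  nlinarith

lemma I_lt (hf : ContDiff ℝ 2 f) (hconv : ∀ u : ℝ, 0 ≤ deriv (deriv f) u)
    (hdeg : volume {u : ℝ | deriv (deriv f) u = 0} = 0) {p q : ℝ} (hpq : p < q) :
    (∫ s in p..q, deriv (deriv f) s * s) < q * (deriv f q - deriv f p) := by
  set m := (p + q) / 2 with hm
  have hpm : p < m := by simp [hm]; linarith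
  have hmq : m < q := by simp [hm]; linarith
  have hsplit : (∫ s in p..m, deriv (deriv f) s * s) + (∫ s in m..q, deriv (deriv f) s * s)
      = ∫ s in p..q, deriv (deriv f) s * s :=
    intervalIntegral.integral_add_adjacent_intervals (contI hf p m) (contI hf m q)
  have h1 := I_le hf hconv hpm.le
  have h2 := I_le hf hconv hmq.le
  have h3 : deriv f p < deriv f m := strictMonoF1 hf hconv hdeg hpm
  have h4 : 0 < (q - m) * (deriv f m - deriv f p) := mul_pos (by linarith) (by linarith)
  nlinarith

/-- splitting the basic integrand -/
lemma split_integrand (hf : ContDiff ℝ 2 f) (hφmeas : Measurable φ)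
    (hφbdd : ∀ y : ℝ, |φ y| ≤ M) (x t a b : ℝ) :
    (∫ s in a..b, deriv (deriv f) s * (φ (x - t * deriv f s) - s))
      = (∫ s in a..b, deriv (deriv f) s * φ (x - t * deriv f s))
        - ∫ s in a..b, deriv (deriv f) s * s := by
  rw [← intervalIntegral.integral_sub (intIntegrandPhi hf hφmeas hφbdd x t a b)
    (contI hf a b)]
  congr 1
  funext s
  ring


lemma eFun_lt_gtM (hf : ContDiff ℝ 2 f) (hconv : ∀ u : ℝ, 0 ≤ deriv (deriv f) u)
    (hdeg : volume {u : ℝ | deriv (deriv f) u = 0} = 0) (hφmeas : Measurable φ)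
    (hφbdd : ∀ y : ℝ, |φ y| ≤ M) {x t u : ℝ} (ht : 0 < t) (hu : M < u) :
    eFun f φ u x t < eFun f φ M x t := by
  have hdiff := eFun_sub hf hφmeas hφbdd x t M u
  have hmono : (∫ s in M..u, deriv (deriv f) s * (φ (x - t * deriv f s) - s))
      ≤ ∫ s in M..u, deriv (deriv f) s * (M - s) := by
    refine intervalIntegral.integral_mono_on hu.le (intIntegrand hf hφmeas hφbdd x t M u)
      (((contF2 hf).mul (continuous_const.sub continuous_id)).intervalIntegrable M u) ?_
    intro s _
    have h1 : φ (x - t * deriv f s) ≤ M := (abs_le.mp (hφbdd _)).2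
    exact mul_le_mul_of_nonneg_left (by linarith) (hconv s)
  have heval : (∫ s in M..u, deriv (deriv f) s * (M - s))
      = M * (deriv f u - deriv f M) - ∫ s in M..u, deriv (deriv f) s * s := by
    have hfe : (fun s => deriv (deriv f) s * (M - s))
        = fun s => deriv (deriv f) s * M - deriv (deriv f) s * s := by funext s; ring
    rw [hfe, intervalIntegral.integral_sub
      (show IntervalIntegrable (fun s => deriv (deriv f) s * M) volume M u from ((contF2 hf).mul continuous_const).intervalIntegrable M u) (contI hf M u),
      intervalIntegral.integral_mul_const, ftcF2 hf, mul_comm]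
  have hI := I_gt hf hconv hdeg (p := M) (q := u) hu
  have hneg : (∫ s in M..u, deriv (deriv f) s * (φ (x - t * deriv f s) - s)) < 0 := by
    linarith
  nlinarith [mul_neg_of_pos_of_neg ht hneg]

lemma eFun_lt_ltNegM (hf : ContDiff ℝ 2 f) (hconv : ∀ u : ℝ, 0 ≤ deriv (deriv f) u)
    (hdeg : volume {u : ℝ | deriv (deriv f) u = 0} = 0) (hφmeas : Measurable φ)
    (hφbdd : ∀ y : ℝ, |φ y| ≤ M) {x t u : ℝ} (ht : 0 < t) (hu : u < -M) :
    eFun f φ u x t < eFun f φ (-M) x t := by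
  have hdiff := eFun_sub hf hφmeas hφbdd x t u (-M)
  have hmono : (∫ s in u..(-M), deriv (deriv f) s * (-M - s))
      ≤ ∫ s in u..(-M), deriv (deriv f) s * (φ (x - t * deriv f s) - s) := by
    refine intervalIntegral.integral_mono_on hu.le
      (((contF2 hf).mul (continuous_const.sub continuous_id)).intervalIntegrable u (-M))
      (intIntegrand hf hφmeas hφbdd x t u (-M)) ?_
    intro s _
    have h1 : -M ≤ φ (x - t * deriv f s) := (abs_le.mp (hφbdd _)).1
    exact mul_le_mul_of_nonneg_left (by linarith) (hconv s)
  have heval : (∫ s in u..(-M), deriv (deriv f) s * (-M - s))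
      = (-M) * (deriv f (-M) - deriv f u) - ∫ s in u..(-M), deriv (deriv f) s * s := by
    have hfe : (fun s => deriv (deriv f) s * (-M - s))
        = fun s => deriv (deriv f) s * (-M) - deriv (deriv f) s * s := by funext s; ring
    rw [hfe, intervalIntegral.integral_sub
      (show IntervalIntegrable (fun s => deriv (deriv f) s * (-M)) volume u (-M) from ((contF2 hf).mul continuous_const).intervalIntegrable u (-M)) (contI hf u (-M)),
      intervalIntegral.integral_mul_const, ftcF2 hf, mul_comm]
  have hI := I_lt hf hconv hdeg (p := u) (q := -M) hu
  have hpos : (0:ℝ) < ∫ s in u..(-M), deriv (deriv f) s * (φ (x - t * deriv f s) - s) := by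
    linarith
  nlinarith [mul_pos ht hpos]

lemma maxSet_nonempty (hf : ContDiff ℝ 2 f) (hconv : ∀ u : ℝ, 0 ≤ deriv (deriv f) u)
    (hdeg : volume {u : ℝ | deriv (deriv f) u = 0} = 0) (hφmeas : Measurable φ)
    (hφbdd : ∀ y : ℝ, |φ y| ≤ M) {x t : ℝ} (ht : 0 < t) :
    (maxSet f φ x t).Nonempty := by
  have hM0 : 0 ≤ M := le_trans (abs_nonneg (φ 0)) (hφbdd 0)
  obtain ⟨w₀, hw₀mem, hw₀⟩ := isCompact_Icc.exists_isMaxOn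
    (Set.nonempty_Icc.mpr (by linarith : -M ≤ M))
    ((contE hf hφmeas hφbdd x t).continuousOn)
  have hmax := isMaxOn_iff.mp hw₀
  refine ⟨w₀, fun v => ?_⟩
  rcases le_or_gt v M with h1 | h1
  · rcases le_or_gt (-M) v with h2 | h2
    · exact hmax v ⟨h2, h1⟩
    · exact le_of_lt (lt_of_lt_of_le (eFun_lt_ltNegM hf hconv hdeg hφmeas hφbdd ht h2)
        (hmax (-M) ⟨le_refl _, by linarith⟩))
  · exact le_of_lt (lt_of_lt_of_le (eFun_lt_gtM hf hconv hdeg hφmeas hφbdd ht h1)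
      (hmax M ⟨by linarith, le_refl _⟩))

lemma maxSet_subset (hf : ContDiff ℝ 2 f) (hconv : ∀ u : ℝ, 0 ≤ deriv (deriv f) u)
    (hdeg : volume {u : ℝ | deriv (deriv f) u = 0} = 0) (hφmeas : Measurable φ)
    (hφbdd : ∀ y : ℝ, |φ y| ≤ M) {x t : ℝ} (ht : 0 < t) :
    maxSet f φ x t ⊆ Icc (-M) M := by
  intro u hu
  constructor
  · by_contra h
    push_neg at h
    have h1 := hu (-M)
    have h2 := eFun_lt_ltNegM hf hconv hdeg hφmeas hφbdd (x := x) ht h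
    linarith
  · by_contra h
    push_neg at h
    have h1 := hu M
    have h2 := eFun_lt_gtM hf hconv hdeg hφmeas hφbdd (x := x) ht h
    linarith

lemma maxSet_closed (hf : ContDiff ℝ 2 f) (hφmeas : Measurable φ)
    (hφbdd : ∀ y : ℝ, |φ y| ≤ M) (x t : ℝ) :
    IsClosed (maxSet f φ x t) := by
  have heq : maxSet f φ x t = ⋂ v, {w | eFun f φ v x t ≤ eFun f φ w x t} := by
    ext w
    simp [maxSet]
  rw [heq]
  exact isClosed_iInter fun v => isClosed_le continuous_const (contE hf hφmeas hφbdd x t)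

lemma uPlus_mem (hf : ContDiff ℝ 2 f) (hconv : ∀ u : ℝ, 0 ≤ deriv (deriv f) u)
    (hdeg : volume {u : ℝ | deriv (deriv f) u = 0} = 0) (hφmeas : Measurable φ)
    (hφbdd : ∀ y : ℝ, |φ y| ≤ M) {x t : ℝ} (ht : 0 < t) :
    uPlus f φ x t ∈ maxSet f φ x t :=
  (maxSet_closed hf hφmeas hφbdd x t).csInf_mem
    (maxSet_nonempty hf hconv hdeg hφmeas hφbdd ht)
    (BddBelow.mono (maxSet_subset hf hconv hdeg hφmeas hφbdd ht) bddBelow_Icc)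

lemma uMinus_mem (hf : ContDiff ℝ 2 f) (hconv : ∀ u : ℝ, 0 ≤ deriv (deriv f) u)
    (hdeg : volume {u : ℝ | deriv (deriv f) u = 0} = 0) (hφmeas : Measurable φ)
    (hφbdd : ∀ y : ℝ, |φ y| ≤ M) {x t : ℝ} (ht : 0 < t) :
    uMinus f φ x t ∈ maxSet f φ x t :=
  (maxSet_closed hf hφmeas hφbdd x t).csSup_mem
    (maxSet_nonempty hf hconv hdeg hφmeas hφbdd ht)
    (BddAbove.mono (maxSet_subset hf hconv hdeg hφmeas hφbdd ht) bddAbove_Icc)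

lemma uPlus_le_uMinus (hf : ContDiff ℝ 2 f) (hconv : ∀ u : ℝ, 0 ≤ deriv (deriv f) u)
    (hdeg : volume {u : ℝ | deriv (deriv f) u = 0} = 0) (hφmeas : Measurable φ)
    (hφbdd : ∀ y : ℝ, |φ y| ≤ M) {x t : ℝ} (ht : 0 < t) :
    uPlus f φ x t ≤ uMinus f φ x t :=
  csInf_le_csSup
    (maxSet_nonempty hf hconv hdeg hφmeas hφbdd ht)
    (BddBelow.mono (maxSet_subset hf hconv hdeg hφmeas hφbdd ht) bddBelow_Icc)
    (BddAbove.mono (maxSet_subset hf hconv hdeg hφmeas hφbdd ht) bddAbove_Icc)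


lemma cov (hf : ContDiff ℝ 2 f) (hconv : ∀ u : ℝ, 0 ≤ deriv (deriv f) u)
    (hdeg : volume {u : ℝ | deriv (deriv f) u = 0} = 0) (hφmeas : Measurable φ)
    {t : ℝ} (ht : 0 < t) {a b : ℝ} (hab : a ≤ b) (x : ℝ) :
    t * ∫ s in a..b, deriv (deriv f) s * φ (x - t * deriv f s)
      = ∫ y in (x - t * deriv f b)..(x - t * deriv f a), φ y := by
  have hmono := strictMonoF1 hf hconv hdeg
  set g : ℝ → ℝ := fun s => x - t * deriv f s with hg
  have hgd : ∀ s ∈ Icc a b, HasDerivWithinAt g (-(t * deriv (deriv f) s)) (Icc a b) s := by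
    intro s _
    exact (((hasDerivF1 hf s).const_mul t).const_sub x).hasDerivWithinAt
  have hinj : InjOn g (Icc a b) := by
    intro s1 _ s2 _ he
    have h1 : deriv f s1 = deriv f s2 := by
      have : t * deriv f s1 = t * deriv f s2 := by
        simp only [hg] at he
        linarith
      exact mul_left_cancel₀ ht.ne' this
    exact hmono.injective h1
  have hgb_le : g b ≤ g a := by
    have := hmono.monotone hab
    simp only [hg]
    nlinarith
  have himg : g '' Icc a b = Icc (g b) (g a) := by
    apply Subset.antisymm
    · rintro y ⟨s, hs, rfl⟩
      have h1 := hmono.monotone hs.1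
      have h2 := hmono.monotone hs.2
      constructor <;> (simp only [hg]; nlinarith)
    · exact intermediate_value_Icc' hab
        ((continuous_const.sub (continuous_const.mul (contF1 hf))).continuousOn)
  have key := integral_image_eq_integral_abs_deriv_smul measurableSet_Icc hgd hinj φ
  rw [himg] at key
  have hfe : (fun s => |(-(t * deriv (deriv f) s))| • φ (g s))
      = fun s => t * (deriv (deriv f) s * φ (g s)) := by
    funext s
    rw [abs_neg, abs_of_nonneg (mul_nonneg ht.le (hconv s)), smul_eq_mul]
    ring
  rw [hfe, MeasureTheory.integral_const_mul] at key
  rw [intervalIntegral.integral_of_le hab, ← MeasureTheory.integral_Icc_eq_integral_Ioc,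
    intervalIntegral.integral_of_le hgb_le, ← MeasureTheory.integral_Icc_eq_integral_Ioc]
  exact key.symm


lemma key_lemma (hf : ContDiff ℝ 2 f) (hconv : ∀ u : ℝ, 0 ≤ deriv (deriv f) u)
    (hdeg : volume {u : ℝ | deriv (deriv f) u = 0} = 0) (hφmeas : Measurable φ)
    (hφbdd : ∀ y : ℝ, |φ y| ≤ M) {t x x' w v : ℝ}
    (ht : 0 < t) (hxx' : x < x') (hw : w ∈ maxSet f φ x t) (hv : v ∈ maxSet f φ x' t) :
    x - t * deriv f w ≤ x' - t * deriv f v := by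
  by_contra hcon
  push_neg at hcon
  have hmono := strictMonoF1 hf hconv hdeg
  set c : ℝ := (x' - x) / t with hc
  have hc0 : 0 < c := div_pos (by linarith) ht
  have htc : t * c = x' - x := by rw [hc]; field_simp
  have hgap : deriv f w + c < deriv f v := by
    by_contra hle
    push_neg at hle
    have h2 : t * (deriv f v - deriv f w - c) ≤ 0 :=
      mul_nonpos_of_nonneg_of_nonpos ht.le (by linarith)
    nlinarith
  have hwv : w < v := hmono.lt_iff_lt.mp (by linarith)
  obtain ⟨v2, hv2mem, hv2⟩ := intermediate_value_Icc hwv.le (contF1 hf).continuousOn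
    (show deriv f v - c ∈ Icc (deriv f w) (deriv f v) from ⟨by linarith, by linarith⟩)
  obtain ⟨w2, hw2mem, hw2⟩ := intermediate_value_Icc hwv.le (contF1 hf).continuousOn
    (show deriv f w + c ∈ Icc (deriv f w) (deriv f v) from ⟨by linarith, by linarith⟩)
  have hwv2 : w < v2 := hmono.lt_iff_lt.mp (by rw [hv2]; linarith)
  have hv2v : v2 < v := hmono.lt_iff_lt.mp (by rw [hv2]; linarith)
  have hww2 : w < w2 := hmono.lt_iff_lt.mp (by rw [hw2]; linarith)
  have hw2v : w2 < v := hmono.lt_iff_lt.mp (by rw [hw2]; linarith)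
  have he1 : x - t * deriv f v2 = x' - t * deriv f v := by
    rw [hv2, mul_sub]; linarith
  have he2 : x - t * deriv f w = x' - t * deriv f w2 := by
    rw [hw2, mul_add]; linarith
  have hA : eFun f φ v2 x t - eFun f φ w x t ≤ 0 := by linarith [hw v2]
  have hB : (0:ℝ) ≤ eFun f φ v x' t - eFun f φ w2 x' t := by linarith [hv w2]
  rw [eFun_sub hf hφmeas hφbdd x t w v2, split_integrand hf hφmeas hφbdd x t w v2] at hA
  rw [eFun_sub hf hφmeas hφbdd x' t w2 v, split_integrand hf hφmeas hφbdd x' t w2 v] at hB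
  have hcov1 := cov hf hconv hdeg hφmeas ht hwv2.le x
  have hcov2 := cov hf hconv hdeg hφmeas ht hw2v.le x'
  rw [← he1, ← he2] at hcov2
  -- hence same φ-integral P occurs in both
  set P : ℝ := ∫ y in (x - t * deriv f v2)..(x - t * deriv f w), φ y with hP
  have hA' : P - t * ∫ s in w..v2, deriv (deriv f) s * s ≤ 0 := by
    rw [mul_sub, hcov1] at hA
    exact hA
  have hB' : (0:ℝ) ≤ P - t * ∫ s in w2..v, deriv (deriv f) s * s := by
    rw [mul_sub, hcov2] at hB
    exact hB
  have hIle : (∫ s in w2..v, deriv (deriv f) s * s) ≤ ∫ s in w..v2, deriv (deriv f) s * s := by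
    have h3 : t * (∫ s in w2..v, deriv (deriv f) s * s)
        ≤ t * ∫ s in w..v2, deriv (deriv f) s * s := by linarith
    exact le_of_mul_le_mul_left h3 ht
  set K : ℝ := deriv f v - deriv f w - c with hK
  have hK0 : 0 < K := by simp [hK]; linarith
  rcases le_or_gt v2 w2 with hcase | hcase
  · have hup := I_le hf hconv hwv2.le
    have hlow := I_gt hf hconv hdeg hw2v
    have e1 : deriv f v2 - deriv f w = K := by rw [hv2, hK]; ring
    have e2 : deriv f v - deriv f w2 = K := by rw [hw2, hK]; ring
    rw [e1] at hup
    rw [e2] at hlow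
    have hmul : v2 * K ≤ w2 * K := mul_le_mul_of_nonneg_right hcase hK0.le
    linarith
  · have hch1 : (∫ s in w2..v2, deriv (deriv f) s * s) + (∫ s in v2..v, deriv (deriv f) s * s)
        = ∫ s in w2..v, deriv (deriv f) s * s :=
      intervalIntegral.integral_add_adjacent_intervals (contI hf w2 v2) (contI hf v2 v)
    have hch2 : (∫ s in w..w2, deriv (deriv f) s * s) + (∫ s in w2..v2, deriv (deriv f) s * s)
        = ∫ s in w..v2, deriv (deriv f) s * s :=
      intervalIntegral.integral_add_adjacent_intervals (contI hf w w2) (contI hf w2 v2)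
    have hlow := I_gt hf hconv hdeg hv2v
    have hup := I_le hf hconv hww2.le
    have e1 : deriv f v - deriv f v2 = c := by rw [hv2]; ring
    have e2 : deriv f w2 - deriv f w = c := by rw [hw2]; ring
    rw [e1] at hlow
    rw [e2] at hup
    have hmul : w2 * c ≤ v2 * c := mul_le_mul_of_nonneg_right hcase.le hc0.le
    linarith

end Aux

/-- the Oleinik-type one-sided inequality. -/
theorem stmt1_oleinik_one_sided
    (f φ : ℝ → ℝ) (M : ℝ)
    (hf : ContDiff ℝ 2 f)
    (hconv : ∀ u : ℝ, 0 ≤ deriv (deriv f) u)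
    (hdeg : volume {u : ℝ | deriv (deriv f) u = 0} = 0)
    (hφmeas : Measurable φ)
    (hφbdd : ∀ x : ℝ, |φ x| ≤ M) :
    (∀ t : ℝ, 0 < t → ∀ x x' : ℝ, x < x' →
      x - t * deriv f (uPlus f φ x t) ≤ x' - t * deriv f (uMinus f φ x' t)) ∧
    (∀ t : ℝ, 0 < t → Monotone (fun x : ℝ => x - t * deriv f (uPlus f φ x t))) ∧
    (∀ t : ℝ, 0 < t → Monotone (fun x : ℝ => x - t * deriv f (uMinus f φ x t))) ∧
    (∀ t : ℝ, 0 < t → ∀ x₁ x₂ : ℝ, x₁ < x₂ →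
      deriv f (uPlus f φ x₂ t) - deriv f (uPlus f φ x₁ t) ≤ (x₂ - x₁) / t) ∧
    (∀ t : ℝ, 0 < t → ∀ x₁ x₂ : ℝ, x₁ < x₂ →
      deriv f (uMinus f φ x₂ t) - deriv f (uMinus f φ x₁ t) ≤ (x₂ - x₁) / t) := by
  have hmono := strictMonoF1 hf hconv hdeg
  have part1 : ∀ t : ℝ, 0 < t → ∀ x x' : ℝ, x < x' →
      x - t * deriv f (uPlus f φ x t) ≤ x' - t * deriv f (uMinus f φ x' t) := by
    intro t ht x x' hxx'
    exact key_lemma hf hconv hdeg hφmeas hφbdd ht hxx'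
      (uPlus_mem hf hconv hdeg hφmeas hφbdd ht)
      (uMinus_mem hf hconv hdeg hφmeas hφbdd ht)
  have hpm : ∀ t : ℝ, 0 < t → ∀ x : ℝ,
      t * deriv f (uPlus f φ x t) ≤ t * deriv f (uMinus f φ x t) := by
    intro t ht x
    exact mul_le_mul_of_nonneg_left
      (hmono.monotone (uPlus_le_uMinus hf hconv hdeg hφmeas hφbdd ht)) ht.le
  have part2 : ∀ t : ℝ, 0 < t → Monotone (fun x : ℝ => x - t * deriv f (uPlus f φ x t)) := by
    intro t ht x x' hle
    rcases eq_or_lt_of_le hle with rfl | hlt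
    · exact le_refl _
    · have h1 := part1 t ht x x' hlt
      have h2 := hpm t ht x'
      simp only
      linarith
  have part3 : ∀ t : ℝ, 0 < t → Monotone (fun x : ℝ => x - t * deriv f (uMinus f φ x t)) := by
    intro t ht x x' hle
    rcases eq_or_lt_of_le hle with rfl | hlt
    · exact le_refl _
    · have h1 := part1 t ht x x' hlt
      have h2 := hpm t ht x
      simp only
      linarith
  refine ⟨part1, part2, part3, ?_, ?_⟩
  · intro t ht x₁ x₂ h12
    have h1 := part2 t ht h12.le
    simp only at h1
    rw [le_div_iff₀ ht]
    linarith
  · intro t ht x₁ x₂ h12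
    have h1 := part3 t ht h12.le
    simp only at h1
    rw [le_div_iff₀ ht]
    linarith
end

section
/- (Maximizers correspond exactly to shock-free backward characteristics.) For every (x₀,t₀) ∈ ℝ × (0,∞) and every c ∈ ℝ: c ∈ 𝒰(x₀,t₀) if and only if 𝒰(x₀ + (t − t₀)·f'(c), t) = {c} for every t ∈ (0, t₀). -/
open MeasureTheory Filter Set Topology

namespace Stmt6Aux

variable {f φ : ℝ → ℝ} {M : ℝ}

lemma myC1 (hf : ContDiff ℝ 2 f) : ContDiff ℝ 1 (deriv f) := by
  have h2 : ContDiff ℝ (1+1) f := by norm_num at hf ⊢; exact hf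
  exact (contDiff_succ_iff_deriv.mp h2).2.2

lemma myDeriv (hf : ContDiff ℝ 2 f) (s : ℝ) :
    HasDerivAt (deriv f) (deriv (deriv f) s) s :=
  (((myC1 hf).differentiable one_ne_zero) s).hasDerivAt

lemma myCont'' (hf : ContDiff ℝ 2 f) : Continuous (deriv (deriv f)) :=
  (contDiff_one_iff_deriv.mp (myC1 hf)).2

lemma myCont' (hf : ContDiff ℝ 2 f) : Continuous (deriv f) :=
  (myC1 hf).continuous

/-- Bounded measurable functions are interval integrable. -/
lemma intbdd {g : ℝ → ℝ} (hg : Measurable g) {C : ℝ} (hC : ∀ x, |g x| ≤ C) (a b : ℝ) :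
    IntervalIntegrable g volume a b := by
  rw [intervalIntegrable_iff]
  have hfin : IntegrableOn (fun _ : ℝ => C) (Set.uIoc a b) volume :=
    (integrableOn_const_iff).mpr (Or.inr measure_Ioc_lt_top)
  exact hfin.mono' (hg.aestronglyMeasurable.restrict)
    (ae_of_all _ fun x => by simpa using hC x)

lemma intphi (hφmeas : Measurable φ) (hφbdd : ∀ x, |φ x| ≤ M) (a b : ℝ) :
    IntervalIntegrable φ volume a b := intbdd hφmeas hφbdd a b

lemma intcomp (hf : ContDiff ℝ 2 f) (hφmeas : Measurable φ) (hφbdd : ∀ x, |φ x| ≤ M)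
    (x t a b : ℝ) :
    IntervalIntegrable (fun s => deriv (deriv f) s * φ (x - t * deriv f s)) volume a b := by
  rw [intervalIntegrable_iff]
  have h1 : IntegrableOn (deriv (deriv f)) (Set.uIoc a b) volume :=
    intervalIntegrable_iff.mp ((myCont'' hf).intervalIntegrable a b)
  have hmeas : Measurable fun s => φ (x - t * deriv f s) :=
    hφmeas.comp (measurable_const.sub ((myCont' hf).measurable.const_mul t))
  have h2 := h1.bdd_mul (c := M) (hmeas.aestronglyMeasurable.restrict)
    (ae_of_all _ fun s => by simpa using hφbdd _)
  exact h2.congr (ae_of_all _ fun s => mul_comm _ _)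

/-- Positivity of integrals of nonnegative functions positive off the degenerate set. -/
lemma aux_pos (hdeg : volume {u : ℝ | deriv (deriv f) u = 0} = 0)
    {g : ℝ → ℝ} (hgc : Continuous g) {a b : ℝ} (hab : a < b)
    (hg0 : ∀ s ∈ Ioc a b, 0 ≤ g s)
    (hsupp : ∀ s ∈ Ioo a b, deriv (deriv f) s ≠ 0 → g s ≠ 0) :
    0 < ∫ s in a..b, g s := by
  rw [intervalIntegral.integral_of_le hab.le]
  have hint : IntegrableOn g (Ioc a b) volume :=
    intervalIntegrable_iff.mp (hgc.intervalIntegrable a b) |>.mono_set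
      (by rw [Set.uIoc_of_le hab.le])
  rw [setIntegral_pos_iff_support_of_nonneg_ae
      ((ae_restrict_iff' measurableSet_Ioc).mpr (ae_of_all _ hg0)) hint]
  have hsub : Ioo a b \ {u : ℝ | deriv (deriv f) u = 0} ⊆ Function.support g ∩ Ioc a b := by
    rintro s ⟨hs, hz⟩
    exact ⟨hsupp s hs hz, Ioo_subset_Ioc_self hs⟩
  calc (0:ENNReal) < volume (Ioo a b) := by
        rw [Real.volume_Ioo]; exact ENNReal.ofReal_pos.mpr (sub_pos.mpr hab)
    _ = volume (Ioo a b \ {u : ℝ | deriv (deriv f) u = 0}) := (measure_diff_null hdeg).symm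
    _ ≤ _ := measure_mono hsub

lemma ftc (hf : ContDiff ℝ 2 f) (a b : ℝ) :
    ∫ s in a..b, deriv (deriv f) s = deriv f b - deriv f a :=
  intervalIntegral.integral_eq_sub_of_hasDerivAt (fun s _ => myDeriv hf s)
    ((myCont'' hf).intervalIntegrable a b)

lemma sm (hf : ContDiff ℝ 2 f) (hconv : ∀ u, 0 ≤ deriv (deriv f) u)
    (hdeg : volume {u : ℝ | deriv (deriv f) u = 0} = 0) : StrictMono (deriv f) := by
  intro a b hab
  have h := ftc hf a b
  have hpos : 0 < ∫ s in a..b, deriv (deriv f) s :=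
    aux_pos hdeg (myCont'' hf) hab (fun s _ => hconv s) (fun s _ hz => hz)
  rw [h] at hpos; linarith

/-- Change of variables: the substitution `y = x - t * f'(s)`. -/
lemma aux_subst (hf : ContDiff ℝ 2 f) (hconv : ∀ u, 0 ≤ deriv (deriv f) u)
    (hdeg : volume {u : ℝ | deriv (deriv f) u = 0} = 0)
    (φ : ℝ → ℝ) (x t : ℝ) (ht : 0 < t) {a b : ℝ} (hab : a ≤ b) :
    t * ∫ s in a..b, deriv (deriv f) s * φ (x - t * deriv f s)
      = ∫ y in (x - t * deriv f b)..(x - t * deriv f a), φ y := by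
  have hsm := sm hf hconv hdeg
  set ψ : ℝ → ℝ := fun s => x - t * deriv f s with hψ
  have hanti : StrictAntiOn ψ (Icc a b) := fun u _ v _ huv => by
    have := hsm huv
    simp only [hψ]
    nlinarith
  have hinj : InjOn ψ (Icc a b) := hanti.injOn
  have hmono : ∀ u v : ℝ, u ≤ v → ψ v ≤ ψ u := fun u v huv => by
    have := hsm.monotone huv
    simp only [hψ]
    nlinarith
  have himg : ψ '' Icc a b = Icc (ψ b) (ψ a) := by
    apply Subset.antisymm
    · rintro _ ⟨s, hs, rfl⟩
      exact ⟨hmono s b hs.2, hmono a s hs.1⟩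
    · exact intermediate_value_Icc' hab (continuous_const.sub (continuous_const.mul (myCont' hf))).continuousOn
  have key := integral_image_eq_integral_abs_deriv_smul (f := ψ)
      (f' := fun s => -(t * deriv (deriv f) s)) measurableSet_Icc
      (fun s _ => (((myDeriv hf s).const_mul t).const_sub x).hasDerivWithinAt) hinj φ
  rw [himg] at key
  have hψle : ψ b ≤ ψ a := hmono a b hab
  rw [intervalIntegral.integral_of_le hψle, intervalIntegral.integral_of_le hab,
    ← MeasureTheory.integral_Icc_eq_integral_Ioc, ← MeasureTheory.integral_Icc_eq_integral_Ioc,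
    key, ← MeasureTheory.integral_const_mul]
  refine integral_congr_ae (ae_of_all _ fun s => ?_)
  have h0 : (0:ℝ) ≤ t * deriv (deriv f) s := mul_nonneg ht.le (hconv s)
  simp only [abs_neg, abs_of_nonneg h0, smul_eq_mul]
  ring

lemma aux_subst' (hf : ContDiff ℝ 2 f) (hconv : ∀ u, 0 ≤ deriv (deriv f) u)
    (hdeg : volume {u : ℝ | deriv (deriv f) u = 0} = 0)
    (φ : ℝ → ℝ) (x t : ℝ) (ht : 0 < t) (a b : ℝ) :
    t * ∫ s in a..b, deriv (deriv f) s * φ (x - t * deriv f s)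
      = ∫ y in (x - t * deriv f b)..(x - t * deriv f a), φ y := by
  rcases le_total a b with hab | hab
  · exact aux_subst hf hconv hdeg φ x t ht hab
  · rw [intervalIntegral.integral_symm b a, intervalIntegral.integral_symm
      (x - t * deriv f a) (x - t * deriv f b), ← aux_subst hf hconv hdeg φ x t ht hab]
    ring

/-- Decomposition of the difference of `eFun` values. -/
lemma delta (hf : ContDiff ℝ 2 f) (hconv : ∀ u, 0 ≤ deriv (deriv f) u)
    (hdeg : volume {u : ℝ | deriv (deriv f) u = 0} = 0)
    (hφmeas : Measurable φ) (hφbdd : ∀ x, |φ x| ≤ M)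
    (x t : ℝ) (ht : 0 < t) (c v : ℝ) :
    eFun f φ v x t - eFun f φ c x t
      = (∫ y in (x - t * deriv f v)..(x - t * deriv f c), φ y)
        - t * ∫ s in c..v, deriv (deriv f) s * s := by
  have hsint : ∀ a b : ℝ, IntervalIntegrable (fun s => deriv (deriv f) s * s) volume a b :=
    fun a b => ((myCont'' hf).mul continuous_id).intervalIntegrable a b
  have hsplit : ∀ u : ℝ, eFun f φ u x t
      = (∫ y in (x - t * deriv f u)..(x - t * deriv f 0), φ y)
        - t * ∫ s in (0:ℝ)..u, deriv (deriv f) s * s := by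
    intro u
    unfold eFun
    have heq : (∫ s in (0:ℝ)..u, deriv (deriv f) s * (φ (x - t * deriv f s) - s))
        = (∫ s in (0:ℝ)..u, deriv (deriv f) s * φ (x - t * deriv f s))
          - ∫ s in (0:ℝ)..u, deriv (deriv f) s * s := by
      rw [← intervalIntegral.integral_sub (intcomp hf hφmeas hφbdd x t 0 u) (hsint 0 u)]
      exact intervalIntegral.integral_congr (fun s _ => by ring)
    rw [heq, mul_sub, aux_subst' hf hconv hdeg φ x t ht 0 u]
  rw [hsplit v, hsplit c]
  have h1 : (∫ y in (x - t * deriv f v)..(x - t * deriv f 0), φ y)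
      - (∫ y in (x - t * deriv f c)..(x - t * deriv f 0), φ y)
      = ∫ y in (x - t * deriv f v)..(x - t * deriv f c), φ y := by
    rw [intervalIntegral.integral_symm (x - t * deriv f 0) (x - t * deriv f v),
      intervalIntegral.integral_symm (x - t * deriv f 0) (x - t * deriv f c)]
    have := intervalIntegral.integral_interval_sub_left
      (intphi hφmeas hφbdd (x - t * deriv f 0) (x - t * deriv f c))
      (intphi hφmeas hφbdd (x - t * deriv f 0) (x - t * deriv f v))
    rw [← this]; ring
  have h2 : (∫ s in (0:ℝ)..v, deriv (deriv f) s * s)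
      - (∫ s in (0:ℝ)..c, deriv (deriv f) s * s)
      = ∫ s in c..v, deriv (deriv f) s * s :=
    intervalIntegral.integral_interval_sub_left (hsint 0 v) (hsint 0 c)
  calc _ = ((∫ y in (x - t * deriv f v)..(x - t * deriv f 0), φ y)
          - (∫ y in (x - t * deriv f c)..(x - t * deriv f 0), φ y))
        - t * ((∫ s in (0:ℝ)..v, deriv (deriv f) s * s)
          - (∫ s in (0:ℝ)..c, deriv (deriv f) s * s)) := by ring
    _ = _ := by rw [h1, h2]

/-- Core inequality. -/
lemma star (hf : ContDiff ℝ 2 f) (hconv : ∀ u, 0 ≤ deriv (deriv f) u)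
    (hdeg : volume {u : ℝ | deriv (deriv f) u = 0} = 0)
    {t t₀ c v w : ℝ} (ht : 0 < t) (htt : t < t₀)
    (hrel : t₀ * (deriv f w - deriv f c) = t * (deriv f v - deriv f c))
    (hcases : (c < w ∧ w < v) ∨ (v < w ∧ w < c)) :
    t₀ * ∫ s in c..w, deriv (deriv f) s * s < t * ∫ s in c..v, deriv (deriv f) s * s := by
  have hsint : ∀ a b : ℝ, IntervalIntegrable (fun s => deriv (deriv f) s * s) volume a b :=
    fun a b => ((myCont'' hf).mul continuous_id).intervalIntegrable a b
  rcases hcases with ⟨hcw, hwv⟩ | ⟨hvw, hwc⟩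
  · -- c < w < v
    have hadd : (∫ s in c..w, deriv (deriv f) s * s) + (∫ s in w..v, deriv (deriv f) s * s)
        = ∫ s in c..v, deriv (deriv f) s * s :=
      intervalIntegral.integral_add_adjacent_intervals (hsint c w) (hsint w v)
    have hA : (∫ s in c..w, deriv (deriv f) s * s) ≤ (deriv f w - deriv f c) * w := by
      have h1 : (∫ s in c..w, deriv (deriv f) s * s) ≤ ∫ s in c..w, deriv (deriv f) s * w :=
        intervalIntegral.integral_mono_on hcw.le (hsint c w)
          (((myCont'' hf).mul continuous_const).intervalIntegrable c w)
          (fun s hs => mul_le_mul_of_nonneg_left hs.2 (hconv s))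
      rwa [intervalIntegral.integral_mul_const, ftc hf] at h1
    have hcont1 : Continuous (fun s => deriv (deriv f) s * (s - w)) :=
      (myCont'' hf).mul (by fun_prop)
    have hcont2 : Continuous (fun s => deriv (deriv f) s * w) :=
      (myCont'' hf).mul continuous_const
    have hB : 0 < ∫ s in w..v, deriv (deriv f) s * (s - w) := by
      refine aux_pos hdeg hcont1 hwv
        (fun s hs => mul_nonneg (hconv s) (by linarith [hs.1])) (fun s hs hz => ?_)
      exact ne_of_gt (mul_pos (lt_of_le_of_ne (hconv s) (Ne.symm hz)) (by linarith [hs.1]))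
    have hC : (∫ s in w..v, deriv (deriv f) s * s)
        = (∫ s in w..v, deriv (deriv f) s * (s - w)) + (deriv f v - deriv f w) * w := by
      have h2 : (deriv f v - deriv f w) * w = ∫ s in w..v, deriv (deriv f) s * w := by
        rw [intervalIntegral.integral_mul_const, ftc hf]
      rw [h2, ← intervalIntegral.integral_add (hcont1.intervalIntegrable w v)
        (hcont2.intervalIntegrable w v)]
      exact intervalIntegral.integral_congr (fun s _ => by ring)
    have h5 : t * ((deriv f v - deriv f w) * w) = (t₀ - t) * ((deriv f w - deriv f c) * w) := by
      linear_combination (-w) * hrel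
    nlinarith [mul_le_mul_of_nonneg_left hA (by linarith : (0:ℝ) ≤ t₀ - t), mul_pos ht hB]
  · -- v < w < c
    have hsymm1 : (∫ s in c..v, deriv (deriv f) s * s) = -∫ s in v..c, deriv (deriv f) s * s :=
      intervalIntegral.integral_symm v c
    have hsymm2 : (∫ s in c..w, deriv (deriv f) s * s) = -∫ s in w..c, deriv (deriv f) s * s :=
      intervalIntegral.integral_symm w c
    have hadd : (∫ s in v..w, deriv (deriv f) s * s) + (∫ s in w..c, deriv (deriv f) s * s)
        = ∫ s in v..c, deriv (deriv f) s * s :=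
      intervalIntegral.integral_add_adjacent_intervals (hsint v w) (hsint w c)
    have hA : (deriv f c - deriv f w) * w ≤ (∫ s in w..c, deriv (deriv f) s * s) := by
      have h1 : (∫ s in w..c, deriv (deriv f) s * w) ≤ ∫ s in w..c, deriv (deriv f) s * s :=
        intervalIntegral.integral_mono_on hwc.le
          (((myCont'' hf).mul continuous_const).intervalIntegrable w c) (hsint w c)
          (fun s hs => mul_le_mul_of_nonneg_left hs.1 (hconv s))
      rwa [intervalIntegral.integral_mul_const, ftc hf] at h1
    have hcont1 : Continuous (fun s => deriv (deriv f) s * (w - s)) :=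
      (myCont'' hf).mul (by fun_prop)
    have hB : 0 < ∫ s in v..w, deriv (deriv f) s * (w - s) := by
      refine aux_pos hdeg hcont1 hvw
        (fun s hs => mul_nonneg (hconv s) (by linarith [hs.2])) (fun s hs hz => ?_)
      exact ne_of_gt (mul_pos (lt_of_le_of_ne (hconv s) (Ne.symm hz)) (by linarith [hs.2]))
    have hC : (∫ s in v..w, deriv (deriv f) s * s)
        = -(∫ s in v..w, deriv (deriv f) s * (w - s)) + (deriv f w - deriv f v) * w := by
      have h2 : (deriv f w - deriv f v) * w = ∫ s in v..w, deriv (deriv f) s * w := by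
        rw [intervalIntegral.integral_mul_const, ftc hf]
      have h3 : (∫ s in v..w, deriv (deriv f) s * s)
          + (∫ s in v..w, deriv (deriv f) s * (w - s)) = ∫ s in v..w, deriv (deriv f) s * w := by
        rw [← intervalIntegral.integral_add (hsint v w) (hcont1.intervalIntegrable v w)]
        exact intervalIntegral.integral_congr (fun s _ => by ring)
      linarith
    have h5 : t * ((deriv f w - deriv f v) * w) = (t₀ - t) * ((deriv f c - deriv f w) * w) := by
      linear_combination w * hrel
    nlinarith [mul_le_mul_of_nonneg_left hA (by linarith : (0:ℝ) ≤ t₀ - t), mul_pos ht hB]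

/-- Forward key lemma: strict decrease along the backward characteristic. -/
lemma fwd (hf : ContDiff ℝ 2 f) (hconv : ∀ u, 0 ≤ deriv (deriv f) u)
    (hdeg : volume {u : ℝ | deriv (deriv f) u = 0} = 0)
    (hφmeas : Measurable φ) (hφbdd : ∀ x, |φ x| ≤ M)
    {x₀ t₀ c : ℝ} (ht₀ : 0 < t₀)
    (hmax : ∀ u, eFun f φ u x₀ t₀ ≤ eFun f φ c x₀ t₀)
    {t : ℝ} (ht : t ∈ Set.Ioo (0:ℝ) t₀) {v : ℝ} (hv : v ≠ c) :
    eFun f φ v (x₀ + (t - t₀) * deriv f c) t < eFun f φ c (x₀ + (t - t₀) * deriv f c) t := by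
  obtain ⟨ht0, htt⟩ := ht
  have hsm := sm hf hconv hdeg
  have hl0 : 0 < t / t₀ := div_pos ht0 ht₀
  have hl1 : t / t₀ < 1 := (div_lt_one ht₀).mpr htt
  set r : ℝ := deriv f c + (t / t₀) * (deriv f v - deriv f c) with hr
  have hrmem : r ∈ uIcc (deriv f c) (deriv f v) := by
    rcases le_total (deriv f c) (deriv f v) with h | h
    · rw [uIcc_of_le h]
      constructor
      · rw [hr]; nlinarith [mul_nonneg hl0.le (sub_nonneg.mpr h)]
      · rw [hr]
        nlinarith [mul_nonneg (by linarith : (0:ℝ) ≤ 1 - t / t₀) (sub_nonneg.mpr h)]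
    · rw [uIcc_of_ge h]
      constructor
      · rw [hr]
        nlinarith [mul_nonneg (by linarith : (0:ℝ) ≤ 1 - t / t₀) (sub_nonneg.mpr h)]
      · rw [hr]; nlinarith [mul_nonneg hl0.le (sub_nonneg.mpr h)]
  obtain ⟨w, hwmem, hwr⟩ := intermediate_value_uIcc ((myCont' hf).continuousOn) hrmem
  have hrel : t₀ * (deriv f w - deriv f c) = t * (deriv f v - deriv f c) := by
    rw [hwr, hr]; field_simp; ring
  have hcases : (c < w ∧ w < v) ∨ (v < w ∧ w < c) := by
    rcases hv.lt_or_gt with h | h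
    · -- v < c
      have hfv : deriv f v < deriv f c := hsm h
      right
      constructor
      · by_contra hle; push_neg at hle
        have := hsm.monotone hle
        rw [hwr] at this; nlinarith
      · by_contra hle; push_neg at hle
        have := hsm.monotone hle
        rw [hwr] at this; nlinarith
    · -- c < v
      have hfv : deriv f c < deriv f v := hsm h
      left
      constructor
      · by_contra hle; push_neg at hle
        have := hsm.monotone hle
        rw [hwr] at this; nlinarith
      · by_contra hle; push_neg at hle
        have := hsm.monotone hle
        rw [hwr] at this; nlinarith
  have hstar := star hf hconv hdeg ht0 htt hrel hcases
  set x : ℝ := x₀ + (t - t₀) * deriv f c with hx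
  have he1 : x - t * deriv f c = x₀ - t₀ * deriv f c := by rw [hx]; ring
  have he2 : x - t * deriv f v = x₀ - t₀ * deriv f w := by
    rw [hx]; linear_combination hrel
  have hd1 := delta hf hconv hdeg hφmeas hφbdd x t ht0 c v
  have hd2 := delta hf hconv hdeg hφmeas hφbdd x₀ t₀ ht₀ c w
  rw [he1, he2] at hd1
  have hmw := hmax w
  linarith

end Stmt6Aux

open Stmt6Aux

/-- maximizers correspond exactly to shock-free backward characteristics. -/
theorem stmt6_maximizer_iff_shock_free
    (f φ : ℝ → ℝ) (M : ℝ)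
    (hf : ContDiff ℝ 2 f)
    (hconv : ∀ u : ℝ, 0 ≤ deriv (deriv f) u)
    (hdeg : volume {u : ℝ | deriv (deriv f) u = 0} = 0)
    (hφmeas : Measurable φ)
    (hφbdd : ∀ x : ℝ, |φ x| ≤ M) :
    ∀ x₀ t₀ : ℝ, 0 < t₀ → ∀ c : ℝ,
      c ∈ maxSet f φ x₀ t₀ ↔
        ∀ t ∈ Set.Ioo (0:ℝ) t₀, maxSet f φ (x₀ + (t - t₀) * deriv f c) t = {c} := by
  intro x₀ t₀ ht₀ c
  constructor
  · intro hc t ht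
    have hmax : ∀ u, eFun f φ u x₀ t₀ ≤ eFun f φ c x₀ t₀ := hc
    apply Set.eq_singleton_iff_unique_mem.mpr
    constructor
    · intro u
      rcases eq_or_ne u c with rfl | hu
      · exact le_refl _
      · exact (fwd hf hconv hdeg hφmeas hφbdd ht₀ hmax ht hu).le
    · intro w hw
      by_contra hne
      have h1 := hw c
      have h2 := fwd hf hconv hdeg hφmeas hφbdd ht₀ hmax ht hne
      linarith
  · intro h
    intro v
    -- continuity argument as t → t₀⁻
    have hsint : IntervalIntegrable (fun s => deriv (deriv f) s * s) volume c v :=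
      ((myCont'' hf).mul continuous_id).intervalIntegrable c v
    set ξ : ℝ := x₀ - t₀ * deriv f c with hξ
    set m : ℝ := deriv f c - deriv f v with hm
    set Jcv : ℝ := ∫ s in c..v, deriv (deriv f) s * s with hJ
    set Φ : ℝ → ℝ := fun p => ∫ y in ξ..p, φ y with hΦ
    have hΦc : Continuous Φ :=
      intervalIntegral.continuous_primitive (fun a b => intphi hφmeas hφbdd a b) ξ
    set G : ℝ → ℝ := fun s => -Φ (ξ + s * m) - s * Jcv with hG
    have hGc : Continuous G := by
      apply Continuous.sub
      · exact (hΦc.comp (continuous_const.add (continuous_id.mul continuous_const))).neg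
      · exact continuous_id.mul continuous_const
    have hGeq : ∀ s : ℝ, 0 < s →
        eFun f φ v (x₀ + (s - t₀) * deriv f c) s
          - eFun f φ c (x₀ + (s - t₀) * deriv f c) s = G s := by
      intro s hs
      rw [delta hf hconv hdeg hφmeas hφbdd _ s hs c v]
      have e1 : x₀ + (s - t₀) * deriv f c - s * deriv f c = ξ := by rw [hξ]; ring
      have e2 : x₀ + (s - t₀) * deriv f c - s * deriv f v = ξ + s * m := by
        rw [hξ, hm]; ring
      rw [e1, e2]
      have e3 : (∫ y in (ξ + s * m)..ξ, φ y) = -Φ (ξ + s * m) := by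
        rw [hΦ]; exact intervalIntegral.integral_symm ξ (ξ + s * m)
      rw [e3, hG]
    have hle : ∀ᶠ s in 𝓝[<] t₀, G s ≤ 0 := by
      filter_upwards [Ioo_mem_nhdsLT_of_mem (show t₀ ∈ Ioc (0:ℝ) t₀ from ⟨ht₀, le_rfl⟩)]
        with s hs
      have hct : c ∈ maxSet f φ (x₀ + (s - t₀) * deriv f c) s := by
        rw [h s hs]; exact rfl
      have hv := hct v
      have := hGeq s hs.1
      linarith
    have htend : Tendsto G (𝓝[<] t₀) (𝓝 (G t₀)) :=
      (hGc.tendsto t₀).mono_left nhdsWithin_le_nhds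
    have hG0 : G t₀ ≤ 0 := le_of_tendsto htend hle
    have hfin := hGeq t₀ ht₀
    have e : x₀ + (t₀ - t₀) * deriv f c = x₀ := by ring
    rw [e] at hfin
    linarith
end

section
/- (Pointwise comparison principle.) If φ₁(x) ≤ φ₂(x) for almost every x ∈ ℝ, then u₁⁻(x,t) ≤ u₂⁻(x,t) and u₁⁺(x,t) ≤ u₂⁺(x,t) for every (x,t) ∈ ℝ × (0,∞). -/
open MeasureTheory Filter Set

/-! ### Auxiliary lemmas -/

lemma aux_cd1 {f : ℝ → ℝ} (hf : ContDiff ℝ 2 f) : ContDiff ℝ 1 (deriv f) := by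
  have h : ContDiff ℝ (1 + 1 : ℕ) f := by norm_num; exact hf
  exact (contDiff_succ_iff_deriv.mp h).2.2

lemma aux_cont_f'' {f : ℝ → ℝ} (hf : ContDiff ℝ 2 f) : Continuous (deriv (deriv f)) :=
  (aux_cd1 hf).continuous_deriv le_rfl

lemma aux_cont_f' {f : ℝ → ℝ} (hf : ContDiff ℝ 2 f) : Continuous (deriv f) :=
  (aux_cd1 hf).continuous

/-- interval integrability of the integrand -/
lemma aux_intInt {f φ : ℝ → ℝ} {M : ℝ} (hf : ContDiff ℝ 2 f) (hφ : Measurable φ)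
    (hbdd : ∀ y, |φ y| ≤ M) (x t a b : ℝ) :
    IntervalIntegrable (fun s => deriv (deriv f) s * (φ (x - t * deriv f s) - s))
      volume a b := by
  have hc2 := aux_cont_f'' hf
  have hc1 := aux_cont_f' hf
  have hmeas : Measurable (fun s => deriv (deriv f) s * (φ (x - t * deriv f s) - s)) :=
    hc2.measurable.mul
      ((hφ.comp (measurable_const.sub (measurable_const.mul hc1.measurable))).sub
        measurable_id)
  rw [intervalIntegrable_iff]
  obtain ⟨C, hC⟩ := (isCompact_uIcc (a := a) (b := b)).exists_bound_of_continuousOn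
    hc2.continuousOn
  apply Measure.integrableOn_of_bounded (M := |C| * (M + (|a| ⊔ |b|)))
    (measure_Ioc_lt_top.ne) hmeas.aestronglyMeasurable
  rw [ae_restrict_iff' measurableSet_Ioc]
  refine ae_of_all _ fun s hs => ?_
  have hs' : s ∈ uIcc a b := uIoc_subset_uIcc hs
  have h1 : |deriv (deriv f) s| ≤ |C| := le_trans (hC s hs') (le_abs_self C)
  have h2 : |φ (x - t * deriv f s) - s| ≤ M + (|a| ⊔ |b|) := by
    have hsa : |s| ≤ |a| ⊔ |b| := by
      rcases hs' with ⟨h, h'⟩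
      have h1 : a ≤ |a| ⊔ |b| := le_trans (le_abs_self a) le_sup_left
      have h2 : b ≤ |a| ⊔ |b| := le_trans (le_abs_self b) le_sup_right
      have h3 : -(|a| ⊔ |b|) ≤ a := le_trans (neg_le_neg le_sup_left) (neg_abs_le a)
      have h4 : -(|a| ⊔ |b|) ≤ b := le_trans (neg_le_neg le_sup_right) (neg_abs_le b)
      rw [abs_le]
      exact ⟨le_trans (le_inf h3 h4) h, le_trans h' (sup_le h1 h2)⟩
    calc |φ (x - t * deriv f s) - s| ≤ |φ (x - t * deriv f s)| + |s| := abs_sub _ _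
      _ ≤ M + (|a| ⊔ |b|) := add_le_add (hbdd _) hsa
  calc ‖deriv (deriv f) s * (φ (x - t * deriv f s) - s)‖
      = |deriv (deriv f) s| * |φ (x - t * deriv f s) - s| := abs_mul _ _
    _ ≤ |C| * (M + (|a| ⊔ |b|)) :=
        mul_le_mul h1 h2 (abs_nonneg _) (abs_nonneg _)

/-- continuity of `u ↦ eFun f φ u x t` -/
lemma aux_eCont {f φ : ℝ → ℝ} {M : ℝ} (hf : ContDiff ℝ 2 f) (hφ : Measurable φ)
    (hbdd : ∀ y, |φ y| ≤ M) (x t : ℝ) :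
    Continuous (fun u => eFun f φ u x t) := by
  unfold eFun
  exact continuous_const.mul
    (intervalIntegral.continuous_primitive (fun a b => aux_intInt hf hφ hbdd x t a b) 0)

/-- strict negativity of integrals of a.e.-negative functions -/
lemma aux_negInt {f F : ℝ → ℝ} {a b : ℝ}
    (hdeg : volume {u : ℝ | deriv (deriv f) u = 0} = 0)
    (hab : a < b) (hF : IntegrableOn F (Ioo a b))
    (h1 : ∀ s ∈ Ioo a b, F s ≤ 0)
    (h2 : ∀ s ∈ Ioo a b, F s = 0 → deriv (deriv f) s = 0) :
    ∫ s in Ioo a b, F s < 0 := by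
  rcases lt_or_eq_of_le (setIntegral_nonpos measurableSet_Ioo h1) with h | h
  · exact h
  exfalso
  have hnn : 0 ≤ᵐ[volume.restrict (Ioo a b)] (fun s => -F s) := by
    rw [EventuallyLE, ae_restrict_iff' measurableSet_Ioo]
    exact ae_of_all _ fun s hs => by simpa using neg_nonneg.mpr (h1 s hs)
  have hzero : ∫ s in Ioo a b, (-F s) = 0 := by
    rw [integral_neg, h, neg_zero]
  have hae : (fun s => -F s) =ᵐ[volume.restrict (Ioo a b)] 0 :=
    (integral_eq_zero_iff_of_nonneg_ae hnn hF.neg).mp hzero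
  have hae2 : ∀ᵐ s ∂volume, s ∈ Ioo a b → deriv (deriv f) s = 0 := by
    have hae' : ∀ᵐ s ∂(volume.restrict (Ioo a b)), -F s = 0 :=
      Filter.Eventually.mono hae (fun s hs => by simpa using hs)
    rw [ae_restrict_iff' measurableSet_Ioo] at hae'
    filter_upwards [hae'] with s hs hsmem
    exact h2 s hsmem (neg_eq_zero.mp (hs hsmem))
  have hnull : volume (Ioo a b) = 0 := by
    have hsub : Ioo a b ⊆ {s | deriv (deriv f) s = 0} ∪
        {s | ¬ (s ∈ Ioo a b → deriv (deriv f) s = 0)} := by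
      intro s hs
      by_cases h' : deriv (deriv f) s = 0
      · exact Or.inl h'
      · exact Or.inr (fun himp => h' (himp hs))
    refine measure_mono_null hsub (measure_union_null hdeg ?_)
    exact ae_iff.mp hae2
  rw [Real.volume_Ioo] at hnull
  simp only [ENNReal.ofReal_eq_zero] at hnull
  linarith

/-- strict monotonicity of `deriv f` -/
lemma aux_strictMono {f : ℝ → ℝ} (hf : ContDiff ℝ 2 f)
    (hconv : ∀ u : ℝ, 0 ≤ deriv (deriv f) u)
    (hdeg : volume {u : ℝ | deriv (deriv f) u = 0} = 0) :
    StrictMono (deriv f) := by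
  intro a b hab
  have h1 := aux_cd1 hf
  have hc2 := aux_cont_f'' hf
  have hftc : ∫ s in a..b, deriv (deriv f) s = deriv f b - deriv f a :=
    intervalIntegral.integral_deriv_eq_sub
      (fun s _ => (h1.differentiable one_ne_zero).differentiableAt)
      (hc2.intervalIntegrable a b)
  have hpos : 0 < ∫ s in a..b, deriv (deriv f) s := by
    rw [intervalIntegral.integral_of_le hab.le, integral_Ioc_eq_integral_Ioo]
    have hneg : ∫ s in Ioo a b, (-(deriv (deriv f) s)) < 0 :=
      aux_negInt hdeg hab ((hc2.neg.integrableOn_Icc (a := a) (b := b)).mono_set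
          Ioo_subset_Icc_self)
        (fun s _ => neg_nonpos.mpr (hconv s))
        (fun s _ h => neg_eq_zero.mp h)
    rw [integral_neg] at hneg
    linarith
  linarith [hftc ▸ hpos]

/-- the maximizing set is nonempty, contained in `[-M, M]`, and closed -/
lemma aux_maxSet {f φ : ℝ → ℝ} {M : ℝ} (hf : ContDiff ℝ 2 f)
    (hconv : ∀ u : ℝ, 0 ≤ deriv (deriv f) u)
    (hdeg : volume {u : ℝ | deriv (deriv f) u = 0} = 0)
    (hφ : Measurable φ) (hbdd : ∀ y, |φ y| ≤ M)
    (x t : ℝ) (ht : 0 < t) :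
    (maxSet f φ x t).Nonempty ∧ maxSet f φ x t ⊆ Icc (-M) M ∧
      IsClosed (maxSet f φ x t) := by
  have hM : 0 ≤ M := le_trans (abs_nonneg _) (hbdd 0)
  have hcont := aux_eCont hf hφ hbdd x t
  have hII := fun a b => aux_intInt hf hφ hbdd x t a b
  set F := fun s => deriv (deriv f) s * (φ (x - t * deriv f s) - s) with hF
  -- difference formula
  have hdiff : ∀ a b : ℝ, eFun f φ b x t - eFun f φ a x t = t * ∫ s in a..b, F s := by
    intro a b
    unfold eFun
    rw [← mul_sub]
    congr 1
    have := intervalIntegral.integral_add_adjacent_intervals (hII 0 a) (hII a b)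
    linarith
  -- decay above M
  have hdecayP : ∀ u, M < u → eFun f φ u x t < eFun f φ M x t := by
    intro u hu
    have hint : ∫ s in M..u, F s < 0 := by
      rw [intervalIntegral.integral_of_le hu.le, integral_Ioc_eq_integral_Ioo]
      refine aux_negInt hdeg hu
        ((intervalIntegrable_iff_integrableOn_Ioo_of_le hu.le).mp (hII M u)) ?_ ?_
      · intro s hs
        have h1 : φ (x - t * deriv f s) - s ≤ 0 := by
          have := (abs_le.mp (hbdd (x - t * deriv f s))).2
          have := hs.1
          linarith
        exact mul_nonpos_of_nonneg_of_nonpos (hconv s) h1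
      · intro s hs h0
        have h1 : φ (x - t * deriv f s) - s < 0 := by
          have := (abs_le.mp (hbdd (x - t * deriv f s))).2
          have := hs.1
          linarith
        rcases mul_eq_zero.mp h0 with h | h
        · exact h
        · exact absurd h (ne_of_lt h1)
    have := hdiff M u
    nlinarith
  -- decay below -M
  have hdecayN : ∀ u, u < -M → eFun f φ u x t < eFun f φ (-M) x t := by
    intro u hu
    have hint : 0 < ∫ s in u..(-M), F s := by
      rw [intervalIntegral.integral_of_le hu.le, integral_Ioc_eq_integral_Ioo]
      have hneg : ∫ s in Ioo u (-M), (-F s) < 0 := by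
        refine aux_negInt hdeg hu
          (((intervalIntegrable_iff_integrableOn_Ioo_of_le hu.le).mp (hII u (-M))).neg) ?_ ?_
        · intro s hs
          have h1 : 0 ≤ φ (x - t * deriv f s) - s := by
            have := (abs_le.mp (hbdd (x - t * deriv f s))).1
            have := hs.2
            linarith
          simpa using mul_nonneg (hconv s) h1
        · intro s hs h0
          have h1 : 0 < φ (x - t * deriv f s) - s := by
            have := (abs_le.mp (hbdd (x - t * deriv f s))).1
            have := hs.2
            linarith
          rcases mul_eq_zero.mp (neg_eq_zero.mp h0) with h | h
          · exact h
          · exact absurd h (ne_of_gt h1)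
      rw [integral_neg] at hneg
      linarith
    have := hdiff u (-M)
    nlinarith
  -- nonempty
  obtain ⟨w₀, hw₀mem, hw₀max⟩ :=
    (isCompact_Icc (a := -M) (b := M)).exists_isMaxOn
      (nonempty_Icc.mpr (by linarith)) hcont.continuousOn
  have hw₀ : w₀ ∈ maxSet f φ x t := by
    intro v
    rcases le_or_gt v M with hvM | hvM
    · rcases le_or_gt (-M) v with hvM' | hvM'
      · exact hw₀max ⟨hvM', hvM⟩
      · exact le_trans (hdecayN v hvM').le (hw₀max ⟨by linarith, by linarith⟩)
    · exact le_trans (hdecayP v hvM).le (hw₀max ⟨by linarith, by linarith⟩)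
  refine ⟨⟨w₀, hw₀⟩, ?_, ?_⟩
  · -- contained in Icc
    intro w hw
    constructor
    · by_contra h
      push_neg at h
      exact absurd (hw (-M)) (not_le.mpr (hdecayN w h))
    · by_contra h
      push_neg at h
      exact absurd (hw M) (not_le.mpr (hdecayP w h))
  · -- closed
    have : maxSet f φ x t = ⋂ v, {w | eFun f φ v x t ≤ eFun f φ w x t} := by
      ext w; simp [maxSet, mem_iInter]
    rw [this]
    exact isClosed_iInter fun v => isClosed_le continuous_const hcont

/-- key monotonicity: the difference `eFun f φ₂ - eFun f φ₁` is nondecreasing -/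
lemma aux_key {f φ₁ φ₂ : ℝ → ℝ} {M₁ M₂ : ℝ} (hf : ContDiff ℝ 2 f)
    (hconv : ∀ u : ℝ, 0 ≤ deriv (deriv f) u)
    (hdeg : volume {u : ℝ | deriv (deriv f) u = 0} = 0)
    (hφ₁ : Measurable φ₁) (hbdd₁ : ∀ y, |φ₁ y| ≤ M₁)
    (hφ₂ : Measurable φ₂) (hbdd₂ : ∀ y, |φ₂ y| ≤ M₂)
    (hle : ∀ᵐ y : ℝ ∂volume, φ₁ y ≤ φ₂ y)
    (x t : ℝ) (ht : 0 < t) {a b : ℝ} (hab : a ≤ b) :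
    eFun f φ₁ b x t - eFun f φ₁ a x t ≤ eFun f φ₂ b x t - eFun f φ₂ a x t := by
  have hII₁ := fun a b => aux_intInt hf hφ₁ hbdd₁ x t a b
  have hII₂ := fun a b => aux_intInt hf hφ₂ hbdd₂ x t a b
  set F₁ := fun s => deriv (deriv f) s * (φ₁ (x - t * deriv f s) - s) with hF₁
  set F₂ := fun s => deriv (deriv f) s * (φ₂ (x - t * deriv f s) - s) with hF₂
  have hdiff : ∀ (φ : ℝ → ℝ), (∀ c d, IntervalIntegrable
      (fun s => deriv (deriv f) s * (φ (x - t * deriv f s) - s)) volume c d) →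
      eFun f φ b x t - eFun f φ a x t =
        t * ∫ s in a..b, deriv (deriv f) s * (φ (x - t * deriv f s) - s) := by
    intro φ hII
    unfold eFun
    rw [← mul_sub]
    congr 1
    have := intervalIntegral.integral_add_adjacent_intervals (hII 0 a) (hII a b)
    linarith
  rw [hdiff φ₁ hII₁, hdiff φ₂ hII₂]
  have hkey : ∫ s in a..b, F₁ s ≤ ∫ s in a..b, F₂ s := by
    rw [← sub_nonneg, ← intervalIntegral.integral_sub (hII₂ a b) (hII₁ a b)]
    rw [intervalIntegral.integral_of_le hab, integral_Ioc_eq_integral_Ioo]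
    -- change of variables
    set g := fun s => x - t * deriv f s with hg
    have hder : ∀ s ∈ Ioo a b, HasDerivWithinAt g (-(t * deriv (deriv f) s)) (Ioo a b) s := by
      intro s _
      have h1 : HasDerivAt (deriv f) (deriv (deriv f) s) s :=
        (((aux_cd1 hf).differentiable one_ne_zero) s).hasDerivAt
      exact ((h1.const_mul t).const_sub x).hasDerivWithinAt
    have hanti : StrictAnti g := by
      intro s s' hss
      have := aux_strictMono hf hconv hdeg hss
      have := mul_lt_mul_of_pos_left this ht
      simpa [hg] using by linarith
    have hinj : InjOn g (Ioo a b) := hanti.injective.injOn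
    have himg := integral_image_eq_integral_abs_deriv_smul measurableSet_Ioo hder hinj
      (fun y => φ₂ y - φ₁ y)
    have h0 : 0 ≤ ∫ y in g '' Ioo a b, (φ₂ y - φ₁ y) :=
      integral_nonneg_of_ae (ae_restrict_of_ae (hle.mono fun y hy => sub_nonneg.mpr hy))
    rw [himg] at h0
    have heq : ∀ s : ℝ, |(-(t * deriv (deriv f) s))| • (φ₂ (g s) - φ₁ (g s)) =
        t * (F₂ s - F₁ s) := by
      intro s
      rw [abs_neg, abs_of_nonneg (mul_nonneg ht.le (hconv s))]
      simp only [smul_eq_mul, hF₁, hF₂, hg]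
      ring
    simp only [heq] at h0
    rw [integral_const_mul] at h0
    exact (mul_nonneg_iff_of_pos_left ht).mp h0
  nlinarith

/-- pointwise comparison principle. -/
theorem stmt8_comparison
    (f φ₁ φ₂ : ℝ → ℝ) (M₁ M₂ : ℝ)
    (hf : ContDiff ℝ 2 f)
    (hconv : ∀ u : ℝ, 0 ≤ deriv (deriv f) u)
    (hdeg : volume {u : ℝ | deriv (deriv f) u = 0} = 0)
    (hφ₁meas : Measurable φ₁)
    (hφ₁bdd : ∀ x : ℝ, |φ₁ x| ≤ M₁)
    (hφ₂meas : Measurable φ₂)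
    (hφ₂bdd : ∀ x : ℝ, |φ₂ x| ≤ M₂)
    (hle : ∀ᵐ x : ℝ ∂volume, φ₁ x ≤ φ₂ x) :
    ∀ x t : ℝ, 0 < t →
      uMinus f φ₁ x t ≤ uMinus f φ₂ x t ∧ uPlus f φ₁ x t ≤ uPlus f φ₂ x t := by
  intro x t ht
  obtain ⟨hne₁, hsub₁, hcl₁⟩ := aux_maxSet hf hconv hdeg hφ₁meas hφ₁bdd x t ht
  obtain ⟨hne₂, hsub₂, hcl₂⟩ := aux_maxSet hf hconv hdeg hφ₂meas hφ₂bdd x t ht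
  have hcpt₁ : IsCompact (maxSet f φ₁ x t) :=
    Metric.isCompact_of_isClosed_isBounded hcl₁
      ((Metric.isBounded_Icc (-M₁) M₁).subset hsub₁)
  have hcpt₂ : IsCompact (maxSet f φ₂ x t) :=
    Metric.isCompact_of_isClosed_isBounded hcl₂
      ((Metric.isBounded_Icc (-M₂) M₂).subset hsub₂)
  have hkey := fun (a b : ℝ) (hab : a ≤ b) =>
    aux_key hf hconv hdeg hφ₁meas hφ₁bdd hφ₂meas hφ₂bdd hle x t ht hab
  constructor
  · -- uMinus
    have ha₁ : sSup (maxSet f φ₁ x t) ∈ maxSet f φ₁ x t := hcpt₁.sSup_mem hne₁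
    have ha₂ : sSup (maxSet f φ₂ x t) ∈ maxSet f φ₂ x t := hcpt₂.sSup_mem hne₂
    by_contra h
    push_neg at h
    set a₁ := sSup (maxSet f φ₁ x t)
    set a₂ := sSup (maxSet f φ₂ x t)
    have h21 : a₂ ≤ a₁ := (lt_of_lt_of_le h le_rfl).le
    have hE : eFun f φ₂ a₂ x t ≤ eFun f φ₂ a₁ x t := by
      have h1 := hkey a₂ a₁ h21
      have h2 : eFun f φ₁ a₂ x t ≤ eFun f φ₁ a₁ x t := ha₁ a₂
      linarith
    have ha₁mem2 : a₁ ∈ maxSet f φ₂ x t := fun v => le_trans (ha₂ v) hE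
    have : a₁ ≤ a₂ := le_csSup hcpt₂.bddAbove ha₁mem2
    exact absurd this (not_le.mpr h)
  · -- uPlus
    have hb₁ : sInf (maxSet f φ₁ x t) ∈ maxSet f φ₁ x t := hcpt₁.sInf_mem hne₁
    have hb₂ : sInf (maxSet f φ₂ x t) ∈ maxSet f φ₂ x t := hcpt₂.sInf_mem hne₂
    by_contra h
    push_neg at h
    set b₁ := sInf (maxSet f φ₁ x t)
    set b₂ := sInf (maxSet f φ₂ x t)
    have h21 : b₂ ≤ b₁ := h.le
    have hE : eFun f φ₁ b₁ x t ≤ eFun f φ₁ b₂ x t := by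
      have h1 := hkey b₂ b₁ h21
      have h2 : eFun f φ₂ b₁ x t ≤ eFun f φ₂ b₂ x t := hb₂ b₁
      linarith
    have hb₂mem1 : b₂ ∈ maxSet f φ₁ x t := fun v => le_trans (hb₁ v) hE
    have : b₁ ≤ b₂ := csInf_le hcpt₁.bddBelow hb₂mem1
    exact absurd this (not_le.mpr h)
end
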